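/- The Casimir element C = M₁² − {M₂, L} + 3L² of the stabilizing algebra is realized by the identity operator on the quadratic grid: for every function f : ℂ → ℂ and every x ∈ ℂ with x(x−1)(x+1) ≠ 0, (M₁(M₁f))(x) − (M₂(Lf))(x) − (L(M₂f))(x) + 3(L(Lf))(x) = f(x). -/
import Mathlib


noncomputable section

/-- The S–Heun lowering operator L on the quadratic grid λ_x = x². -/
def opL (f : ℂ → ℂ) : ℂ → ℂ := fun x => (f (x + 1) - f (x - 1)) / (4 * x)

/-- The stabilizing S–Heun operator M₁ on the quadratic grid. -/
def opM1 (f : ℂ → ℂ) : ℂ → ℂ :=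
  fun x => ((2 * x - 1) * f (x + 1) + (2 * x + 1) * f (x - 1)) / (4 * x)

/-- The stabilizing S–Heun operator M₂ on the quadratic grid. -/
def opM2 (f : ℂ → ℂ) : ℂ → ℂ :=
  fun x => ((x ^ 2 + (x - 1) ^ 2) * f (x + 1) - ((x + 1) ^ 2 + x ^ 2) * f (x - 1)) / (4 * x)

/-- The raising S–Heun operator R₁ = λ_x M₁ on the quadratic grid. -/
def opR1 (f : ℂ → ℂ) : ℂ → ℂ := fun x => x ^ 2 * opM1 f x

/-- The raising S–Heun operator R₂ = λ_x M₂ on the quadratic grid. -/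
def opR2 (f : ℂ → ℂ) : ℂ → ℂ := fun x => x ^ 2 * opM2 f x

/-- the Casimir element C = M₁² − {M₂,L} + 3L² of the stabilizing
algebra is realized by the identity operator on the quadratic grid. -/
theorem stmt7 (f : ℂ → ℂ) (x : ℂ) (hx : x * (x - 1) * (x + 1) ≠ 0) :
    opM1 (opM1 f) x - opM2 (opL f) x - opL (opM2 f) x + 3 * opL (opL f) x = f x := by
  have hx0 : x ≠ 0 := fun h => hx (by rw [h]; ring)
  have hx1 : x - 1 ≠ 0 := by intro h; apply hx; rw [show x = 1 by linear_combination h]; ring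
  have hx2 : x + 1 ≠ 0 := by intro h; apply hx; rw [show x = -1 by linear_combination h]; ring
  simp only [opM1, opM2, opL]
  have e1 : x + 1 + 1 = x + 2 := by ring
  have e2 : x + 1 - 1 = x := by ring
  have e3 : x - 1 + 1 = x := by ring
  have e4 : x - 1 - 1 = x - 2 := by ring
  rw [e1, e2, e3, e4]
  field_simp
  ring
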